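/- If G is a graph with bipartite independence number less than m (i.e., G is m-joined: every two disjoint vertex sets of size m have an edge between them), then every vertex subset U of G with |U| = 3m contains a subset inducing a connected subgraph of size at least m. -/
import Mathlib

private inductive Conn {V : Type*} (G : SimpleGraph V) (P : V → Prop) : V → V → Prop
  | refl (x : V) (hx : P x) : Conn G P x x
  | tail {x y z : V} (h : Conn G P x y) (hadj : G.Adj y z) (hz : P z) : Conn G P x z

private lemma Conn.mem_right {V : Type*} {G : SimpleGraph V} {P : V → Prop} {x y : V}
    (h : Conn G P x y) : P y := by
  induction h with
  | refl hx => exact hx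
  | tail _ _ hz _ => exact hz

private lemma Conn.mem_left {V : Type*} {G : SimpleGraph V} {P : V → Prop} {x y : V}
    (h : Conn G P x y) : P x := by
  induction h with
  | refl hx => exact hx
  | tail _ _ _ ih => exact ih

private lemma Conn.symm {V : Type*} {G : SimpleGraph V} {P : V → Prop} {x y : V}
    (h : Conn G P x y) : Conn G P y x := by
  induction h with
  | refl hx => exact Conn.refl _ hx
  | @tail y z hxy hadj hz ih =>
      have hzy : Conn G P z y := Conn.tail (Conn.refl z hz) hadj.symm hxy.mem_right
      clear hadj hz hxy
      induction ih with
      | refl _ => exact hzy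
      | tail _ hadj' hz' ih' => exact Conn.tail ih' hadj' hz'

private lemma Conn.trans {V : Type*} {G : SimpleGraph V} {P : V → Prop} {x y z : V}
    (h1 : Conn G P x y) (h2 : Conn G P y z) : Conn G P x z := by
  induction h2 with
  | refl _ => exact h1
  | tail _ hadj hz ih => exact Conn.tail ih hadj hz

private lemma Conn.reach {V : Type*} {G : SimpleGraph V} {P : V → Prop} {v b : V}
    (h : Conn G P v b) (s : Set V) (hs : ∀ x, Conn G P v x → x ∈ s)
    (hv : v ∈ s) (hb : b ∈ s) :
    (G.induce s).Reachable ⟨v, hv⟩ ⟨b, hb⟩ := by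
  induction h with
  | refl => exact SimpleGraph.Reachable.refl _
  | @tail y z h hadj hz ih =>
      refine (ih (hs _ h)).trans (SimpleGraph.Adj.reachable ?_)
      exact hadj

private lemma Conn.mem_closed {V : Type*} {G : SimpleGraph V} {P : V → Prop} {v u : V}
    (h : Conn G P v u) {A : Set V} (hv : v ∈ A)
    (hcl : ∀ x ∈ A, ∀ y, P y → G.Adj x y → y ∈ A) : u ∈ A := by
  induction h with
  | refl => exact hv
  | tail h hadj hz ih => exact hcl _ ih _ hz hadj

open Classical in
theorem stmt0 {V : Type*} [Fintype V] (G : SimpleGraph V) (m : ℕ)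
    (hJ : ∀ S T : Finset V, Disjoint S T → S.card = m → T.card = m →
      ∃ a ∈ S, ∃ b ∈ T, G.Adj a b)
    (U : Finset V) (hU : U.card = 3 * m) :
    ∃ C ⊆ U, m ≤ C.card ∧ (G.induce (↑C : Set V)).Connected := by
  rcases Nat.eq_zero_or_pos m with hm | hm
  · subst hm
    obtain ⟨a, ha, -⟩ := hJ ∅ ∅ (Finset.disjoint_empty_left _) rfl rfl
    exact absurd ha (Finset.notMem_empty a)
  -- the family of closed subsets of U of size ≥ m
  set P : V → Prop := fun x => x ∈ U with hP
  set 𝒜 : Finset (Finset V) := U.powerset.filter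
    (fun A => m ≤ A.card ∧ ∀ a ∈ A, ∀ b ∈ U, b ∉ A → ¬ G.Adj a b) with h𝒜
  have hU𝒜 : U ∈ 𝒜 := by
    simp only [h𝒜, Finset.mem_filter, Finset.mem_powerset]
    exact ⟨subset_rfl, by omega, fun a _ b hb hb' _ => hb' hb⟩
  obtain ⟨A, hA𝒜, hAmin⟩ := Finset.exists_min_image 𝒜 Finset.card ⟨U, hU𝒜⟩
  simp only [h𝒜, Finset.mem_filter, Finset.mem_powerset] at hA𝒜
  obtain ⟨hAU, hAm, hAcl⟩ := hA𝒜
  obtain ⟨v, hv⟩ : A.Nonempty := Finset.card_pos.mp (by omega)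
  set Cv : Finset V := U.filter (fun u => Conn G P v u) with hCv
  have hvU : v ∈ U := hAU hv
  have hvCv : v ∈ Cv := by
    simp only [hCv, Finset.mem_filter]
    exact ⟨hvU, Conn.refl v hvU⟩
  have hCvU : Cv ⊆ U := Finset.filter_subset _ _
  have hmemCv : ∀ x, x ∈ Cv ↔ Conn G P v x := by
    intro x
    simp only [hCv, Finset.mem_filter]
    exact ⟨fun h => h.2, fun h => ⟨h.mem_right, h⟩⟩
  -- Cv ⊆ A
  have hCvA : Cv ⊆ A := by
    intro x hx
    have hconn := (hmemCv x).mp hx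
    exact hconn.mem_closed hv (fun a ha b hbU hadj => by
      by_contra hbA
      exact hAcl a ha b hbU hbA hadj)
  -- connectivity of the induced graph on Cv
  have hconn : (G.induce (↑Cv : Set V)).Connected := by
    haveI : Nonempty ((↑Cv : Set V)) := ⟨⟨v, Finset.mem_coe.mpr hvCv⟩⟩
    refine ⟨?_⟩
    rintro ⟨x, hx⟩ ⟨y, hy⟩
    have hx' : Conn G P v x := (hmemCv x).mp (Finset.mem_coe.mp hx)
    have hy' : Conn G P v y := (hmemCv y).mp (Finset.mem_coe.mp hy)
    have hs : ∀ z, Conn G P v z → z ∈ (↑Cv : Set V) := fun z hz =>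
      Finset.mem_coe.mpr ((hmemCv z).mpr hz)
    have h1 := hx'.reach (↑Cv : Set V) hs (hs v (Conn.refl v hvU)) hx
    have h2 := hy'.reach (↑Cv : Set V) hs (hs v (Conn.refl v hvU)) hy
    exact h1.symm.trans h2
  by_cases hbig : m ≤ Cv.card
  · exact ⟨Cv, hCvU, hbig, hconn⟩
  -- otherwise: |Cv| < m, derive a contradiction
  exfalso
  push_neg at hbig
  set B : Finset V := A \ Cv with hB
  have hBcard : B.card = A.card - Cv.card := Finset.card_sdiff_of_subset hCvA
  have hBA : B ⊆ A := Finset.sdiff_subset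
  -- B is closed
  have hBcl : ∀ a ∈ B, ∀ b ∈ U, b ∉ B → ¬ G.Adj a b := by
    intro a ha b hbU hbB hadj
    rw [hB, Finset.mem_sdiff] at ha
    obtain ⟨haA, haCv⟩ := ha
    rw [hB, Finset.mem_sdiff] at hbB
    push_neg at hbB
    by_cases hbA : b ∈ A
    · -- then b ∈ Cv, so Conn v b, so Conn v a via edge b-a, so a ∈ Cv, contra
      have hbCv := hbB hbA
      have : Conn G P v a :=
        Conn.tail ((hmemCv b).mp hbCv) hadj.symm (hAU haA)
      exact haCv ((hmemCv a).mpr this)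
    · exact hAcl a haA b hbU hbA hadj
  -- B can't have card ≥ m by minimality (it's strictly smaller than A)
  have hBsmall : B.card < m := by
    by_contra h
    push_neg at h
    have hB𝒜 : B ∈ 𝒜 := by
      simp only [h𝒜, Finset.mem_filter, Finset.mem_powerset]
      exact ⟨hBA.trans hAU, h, hBcl⟩
    have := hAmin B hB𝒜
    have hvB : v ∉ B := by
      rw [hB, Finset.mem_sdiff]; push_neg; intro _; exact hvCv
    have : B.card < A.card := Finset.card_lt_card ⟨hBA, fun hsub => hvB (hsub hv)⟩
    omega
  have hAcard : A.card ≤ 2 * m - 2 := by omega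
  have hAcardU : A.card ≤ U.card := Finset.card_le_card hAU
  have hUA : (U \ A).card = U.card - A.card := Finset.card_sdiff_of_subset hAU
  obtain ⟨S, hSA, hScard⟩ := Finset.exists_subset_card_eq (show m ≤ A.card from hAm)
  obtain ⟨T, hTUA, hTcard⟩ := Finset.exists_subset_card_eq (show m ≤ (U \ A).card by omega)
  have hdisj : Disjoint S T := by
    refine Finset.disjoint_left.mpr fun x hxS hxT => ?_
    have := hTUA hxT
    rw [Finset.mem_sdiff] at this
    exact this.2 (hSA hxS)
  obtain ⟨a, haS, b, hbT, hadj⟩ := hJ S T hdisj hScard hTcard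
  have hbUA := hTUA hbT
  rw [Finset.mem_sdiff] at hbUA
  exact hAcl a (hSA haS) b hbUA.1 hbUA.2 hadj
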